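/- Let D be a difference scheme D(N, M, d) and let B be a mixed orthogonal array MOA(N, m, p₁¹p₂¹⋯p_m¹, 2) (B has N rows). Let A₂ = D ⊕ (d) be the dN × M array whose row indexed by (i, g) ∈ {1,…,N} × ℤ_d has entries D(i,1)+g, …, D(i,M)+g. If MD(A₂) ≥ 3, then there exists an irredundant mixed orthogonal array IrMOA(dN, M+m, d^M p₁¹p₂¹⋯p_m¹, 2). -/

import Mathlib

open Finset

/-- The Hamming distance between two rows of an array: the number of columns
in which the rows differ. -/
def hamDist {ι κ : Type*} [Fintype κ] (A : ι → κ → ℕ) (i i' : ι) : ℕ :=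
  (Finset.univ.filter fun j => A i j ≠ A i' j).card

/-- `MD(A)`: the minimum Hamming distance over all pairs of distinct rows. -/
noncomputable def minDist {ι κ : Type*} [Fintype κ] (A : ι → κ → ℕ) : ℕ :=
  sInf {n | ∃ i i', i ≠ i' ∧ hamDist A i i' = n}

/-- `A` is a mixed orthogonal array of strength `k` (rows indexed by `ι`,
columns by `κ`, column `j` taking values in `{0, …, lv j − 1}`): in the
subarray given by any choice of at most `k` columns, every tuple of symbols
occurs equally often as a row, namely (number of rows)/(product of the levels
of the chosen columns) times. -/
def IsMOA {ι κ : Type*} [Fintype ι] [Fintype κ] [DecidableEq κ]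
    (A : ι → κ → ℕ) (lv : κ → ℕ) (k : ℕ) : Prop :=
  (∀ i j, A i j < lv j) ∧
  ∀ S : Finset κ, S.card ≤ k → ∀ x : κ → ℕ, (∀ j ∈ S, x j < lv j) →
    (Finset.univ.filter fun i : ι => ∀ j ∈ S, A i j = x j).card * ∏ j ∈ S, lv j
      = Fintype.card ι

/-- An irredundant mixed orthogonal array of strength `k`: an MOA of strength
`k` any two distinct rows of which have Hamming distance at least `k+1`. -/
def IsIrMOA {ι κ : Type*} [Fintype ι] [Fintype κ] [DecidableEq κ]
    (A : ι → κ → ℕ) (lv : κ → ℕ) (k : ℕ) : Prop :=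
  IsMOA A lv k ∧ ∀ i i' : ι, i ≠ i' → k + 1 ≤ hamDist A i i'

/-- A difference scheme `D(r, c, d)`: an `r × c` matrix over `ℤ_d` such that
for any two distinct columns the `r` differences of corresponding entries
take each value of `ℤ_d` exactly `r/d` times. -/
def IsDiffScheme {r c d : ℕ} (B : Fin r → Fin c → ZMod d) : Prop :=
  ∀ j j' : Fin c, j ≠ j' → ∀ g : ZMod d,
    (Finset.univ.filter fun i : Fin r => B i j - B i j' = g).card * d = r

private lemma zmodValEqIff {d : ℕ} [NeZero d] (a : ZMod d) (x : ℕ) (hx : x < d) :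
    a.val = x ↔ a = (x : ZMod d) := by
  constructor
  · intro h
    apply ZMod.val_injective
    rw [ZMod.val_cast_of_lt hx, h]
  · intro h; rw [h, ZMod.val_cast_of_lt hx]

private lemma cardFilterProdEq {α β : Type*} [Fintype α] [Fintype β] [DecidableEq β]
    (P : α → Prop) [DecidablePred P] (f : α → β) :
    (Finset.univ.filter fun p : α × β => P p.1 ∧ p.2 = f p.1).card
      = (Finset.univ.filter P).card := by
  apply Finset.card_bij (fun p _ => p.1)
  · intro p hp; simp at hp ⊢; exact hp.1
  · intro p hp q hq h
    simp at hp hq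
    exact Prod.ext h (by rw [hp.2, hq.2, h])
  · intro a ha; simp at ha; exact ⟨(a, f a), by simp [ha], rfl⟩

private lemma cardFilterProdConst {α β : Type*} [Fintype α] [Fintype β]
    (P : α → Prop) [DecidablePred P] :
    (Finset.univ.filter fun p : α × β => P p.1).card
      = (Finset.univ.filter P).card * Fintype.card β := by
  rw [← Finset.card_univ (α := β), ← Finset.card_product]
  congr 1
  ext p
  simp [Finset.mem_product]

/-- Let `D` be a difference scheme `D(N, M, d)` and `B` an
`MOA(N, m, p₁¹⋯p_m¹, 2)`. Let `A₂ = D ⊕ (d)` be the `dN × M` developed array,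
whose row indexed by `(i, g) ∈ Fin N × ℤ_d` has entries `D(i,j) + g`. If
`MD(A₂) ≥ 3`, then there exists an irredundant mixed orthogonal array
`IrMOA(dN, M+m, d^M p₁¹⋯p_m¹, 2)`. -/
theorem statement17 {N M m d : ℕ} [NeZero d]
    (D : Fin N → Fin M → ZMod d) (hD : IsDiffScheme D)
    (plv : Fin m → ℕ) (B : Fin N → Fin m → ℕ) (hB : IsMOA B plv 2)
    (hMDA₂ : 3 ≤ minDist
      (fun p : Fin N × ZMod d => fun j : Fin M => (D p.1 j + p.2).val)) :
    ∃ C : Fin N × ZMod d → (Fin M ⊕ Fin m) → ℕ,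
      IsIrMOA C (Sum.elim (fun _ => d) plv) 2 := by
  have hdN : Fintype.card (Fin N × ZMod d) = N * d := by
    simp [ZMod.card]
  set C : Fin N × ZMod d → (Fin M ⊕ Fin m) → ℕ :=
    fun p => Sum.elim (fun j => (D p.1 j + p.2).val) (fun j => B p.1 j) with hC
  have hdist : ∀ p q : Fin N × ZMod d, p ≠ q →
      3 ≤ hamDist (fun p : Fin N × ZMod d => fun j : Fin M => (D p.1 j + p.2).val) p q :=
    fun p q hpq => le_trans hMDA₂ (Nat.sInf_le ⟨p, q, hpq, rfl⟩)
  refine ⟨C, ⟨fun p j => ?_, ?_⟩, ?_⟩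
  · -- bounds
    cases j with
    | inl j => exact ZMod.val_lt _
    | inr j => exact hB.1 p.1 j
  · -- counting
    intro S hS x hx
    rw [hdN]
    interval_cases hc : S.card
    · -- empty
      rw [Finset.card_eq_zero.mp hc]
      simp [Finset.card_univ, hdN]
    · -- singleton
      obtain ⟨a, rfl⟩ := Finset.card_eq_one.mp hc
      cases a with
      | inl j =>
        have hxj : x (Sum.inl j) < d := hx _ (Finset.mem_singleton_self _)
        have hfe : (Finset.univ.filter fun p : Fin N × ZMod d =>
            ∀ j' ∈ ({Sum.inl j} : Finset (Fin M ⊕ Fin m)), C p j' = x j')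
            = Finset.univ.filter fun p : Fin N × ZMod d =>
              (fun _ : Fin N => True) p.1 ∧ p.2 = ((x (Sum.inl j) : ZMod d) - D p.1 j) := by
          apply Finset.filter_congr
          intro p _
          simp only [Finset.mem_singleton, forall_eq, hC, Sum.elim_inl, true_and]
          rw [zmodValEqIff _ _ hxj, eq_sub_iff_add_eq, add_comm]
        rw [hfe, cardFilterProdEq (fun _ : Fin N => True)
          (fun i => ((x (Sum.inl j) : ZMod d) - D i j))]
        simp [mul_comm]
      | inr j =>
        have hxj : x (Sum.inr j) < plv j := hx _ (Finset.mem_singleton_self _)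
        have hfe : (Finset.univ.filter fun p : Fin N × ZMod d =>
            ∀ j' ∈ ({Sum.inr j} : Finset (Fin M ⊕ Fin m)), C p j' = x j')
            = Finset.univ.filter fun p : Fin N × ZMod d =>
              (fun i : Fin N => B i j = x (Sum.inr j)) p.1 := by
          apply Finset.filter_congr
          intro p _
          simp [hC]
        have hcount := hB.2 {j} (by simp) (fun j' => x (Sum.inr j'))
          (by simpa using hxj)
        simp only [Finset.mem_singleton, forall_eq, Finset.prod_singleton,
          Fintype.card_fin] at hcount
        rw [hfe, cardFilterProdConst (β := ZMod d) (fun i : Fin N => B i j = x (Sum.inr j))]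
        simp only [Finset.prod_singleton, Sum.elim_inr, ZMod.card]
        rw [mul_right_comm, hcount]
    · -- pair
      obtain ⟨a, b, hab, rfl⟩ := Finset.card_eq_two.mp hc
      have hmem : ∀ (p : Fin N × ZMod d),
          (∀ j ∈ ({a, b} : Finset (Fin M ⊕ Fin m)), C p j = x j) ↔
            (C p a = x a ∧ C p b = x b) := by
        intro p; simp
      rw [Finset.prod_pair hab]
      match a, b with
      | Sum.inl j, Sum.inl j' =>
        have hjj' : j ≠ j' := fun h => hab (by rw [h])
        have hxj : x (Sum.inl j) < d := hx _ (by simp)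
        have hxj' : x (Sum.inl j') < d := hx _ (by simp)
        have hfe : (Finset.univ.filter fun p : Fin N × ZMod d =>
            ∀ t ∈ ({Sum.inl j, Sum.inl j'} : Finset (Fin M ⊕ Fin m)), C p t = x t)
            = Finset.univ.filter fun p : Fin N × ZMod d =>
              (fun i : Fin N => D i j - D i j'
                = (x (Sum.inl j) : ZMod d) - (x (Sum.inl j') : ZMod d)) p.1 ∧
              p.2 = ((x (Sum.inl j) : ZMod d) - D p.1 j) := by
          apply Finset.filter_congr
          intro p _
          rw [hmem p]
          simp only [hC, Sum.elim_inl]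
          rw [zmodValEqIff _ _ hxj, zmodValEqIff _ _ hxj']
          constructor
          · rintro ⟨h1, h2⟩
            exact ⟨by linear_combination h1 - h2, by linear_combination h1⟩
          · rintro ⟨h1, h2⟩
            exact ⟨by linear_combination h2, by linear_combination h2 - h1⟩
        rw [hfe, cardFilterProdEq (fun i : Fin N => D i j - D i j'
            = (x (Sum.inl j) : ZMod d) - (x (Sum.inl j') : ZMod d))
          (fun i => ((x (Sum.inl j) : ZMod d) - D i j))]
        have hcount := hD j j' hjj' ((x (Sum.inl j) : ZMod d) - (x (Sum.inl j') : ZMod d))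
        simp only [Sum.elim_inl]
        rw [← mul_assoc, hcount]
      | Sum.inl j, Sum.inr j' =>
        have hxj : x (Sum.inl j) < d := hx _ (by simp)
        have hfe : (Finset.univ.filter fun p : Fin N × ZMod d =>
            ∀ t ∈ ({Sum.inl j, Sum.inr j'} : Finset (Fin M ⊕ Fin m)), C p t = x t)
            = Finset.univ.filter fun p : Fin N × ZMod d =>
              (fun i : Fin N => B i j' = x (Sum.inr j')) p.1 ∧
              p.2 = ((x (Sum.inl j) : ZMod d) - D p.1 j) := by
          apply Finset.filter_congr
          intro p _
          rw [hmem p]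
          simp only [hC, Sum.elim_inl, Sum.elim_inr]
          rw [zmodValEqIff _ _ hxj, eq_sub_iff_add_eq, add_comm]
          exact and_comm
        have hcount := hB.2 {j'} (by simp) (fun t => x (Sum.inr t))
          (by simpa using hx _ (by simp : Sum.inr j' ∈ ({Sum.inl j, Sum.inr j'} : Finset (Fin M ⊕ Fin m))))
        simp only [Finset.mem_singleton, forall_eq, Finset.prod_singleton,
          Fintype.card_fin] at hcount
        rw [hfe, cardFilterProdEq (fun i : Fin N => B i j' = x (Sum.inr j'))
          (fun i => ((x (Sum.inl j) : ZMod d) - D i j))]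
        simp only [Sum.elim_inl, Sum.elim_inr]
        rw [mul_comm d (plv j'), ← mul_assoc, hcount]
      | Sum.inr j, Sum.inl j' =>
        have hxj' : x (Sum.inl j') < d := hx _ (by simp)
        have hfe : (Finset.univ.filter fun p : Fin N × ZMod d =>
            ∀ t ∈ ({Sum.inr j, Sum.inl j'} : Finset (Fin M ⊕ Fin m)), C p t = x t)
            = Finset.univ.filter fun p : Fin N × ZMod d =>
              (fun i : Fin N => B i j = x (Sum.inr j)) p.1 ∧
              p.2 = ((x (Sum.inl j') : ZMod d) - D p.1 j') := by
          apply Finset.filter_congr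
          intro p _
          rw [hmem p]
          simp only [hC, Sum.elim_inl, Sum.elim_inr]
          rw [zmodValEqIff _ _ hxj', eq_sub_iff_add_eq, add_comm]
        have hcount := hB.2 {j} (by simp) (fun t => x (Sum.inr t))
          (by simpa using hx _ (by simp : Sum.inr j ∈ ({Sum.inr j, Sum.inl j'} : Finset (Fin M ⊕ Fin m))))
        simp only [Finset.mem_singleton, forall_eq, Finset.prod_singleton,
          Fintype.card_fin] at hcount
        rw [hfe, cardFilterProdEq (fun i : Fin N => B i j = x (Sum.inr j))
          (fun i => ((x (Sum.inl j') : ZMod d) - D i j'))]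
        simp only [Sum.elim_inl, Sum.elim_inr]
        rw [← mul_assoc, hcount]
      | Sum.inr j, Sum.inr j' =>
        have hjj' : j ≠ j' := fun h => hab (by rw [h])
        have hfe : (Finset.univ.filter fun p : Fin N × ZMod d =>
            ∀ t ∈ ({Sum.inr j, Sum.inr j'} : Finset (Fin M ⊕ Fin m)), C p t = x t)
            = Finset.univ.filter fun p : Fin N × ZMod d =>
              (fun i : Fin N => B i j = x (Sum.inr j) ∧ B i j' = x (Sum.inr j')) p.1 := by
          apply Finset.filter_congr
          intro p _
          rw [hmem p]
          simp [hC]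
        have hcount := hB.2 {j, j'} (by exact (Finset.card_insert_le _ _).trans (by simp))
          (fun t => x (Sum.inr t)) (by
            intro t ht
            simp only [Finset.mem_insert, Finset.mem_singleton] at ht
            rcases ht with rfl | rfl
            · exact hx _ (by simp)
            · exact hx _ (by simp))
        rw [Finset.prod_pair hjj'] at hcount
        simp only [Finset.mem_insert, Finset.mem_singleton, forall_eq_or_imp, forall_eq,
          Fintype.card_fin] at hcount
        rw [hfe, cardFilterProdConst (β := ZMod d)
          (fun i : Fin N => B i j = x (Sum.inr j) ∧ B i j' = x (Sum.inr j'))]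
        simp only [Sum.elim_inr, ZMod.card]
        rw [mul_right_comm, hcount]
  · -- irredundancy
    intro p q hpq
    refine le_trans (hdist p q hpq) ?_
    apply Finset.card_le_card_of_injOn Sum.inl
    · intro j hj
      simp only [Finset.mem_coe, Finset.mem_filter, Finset.mem_univ, true_and] at hj ⊢
      exact hj
    · intro a _ b _ h
      exact Sum.inl.inj h
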